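/- Let f be a C³ probability density on an interval (a,b) ⊂ ℝ, positive on (a,b), and let a < c < b. Suppose f extends continuously to [a,c] with f(a+0) and f'(a+0) existing (case κ₁ = 1, with f(a+0) = A₁ > 0). Define I⁻_s(c,f,ε) := ∫_a^c f(x)^{1-s} f(x+ε)^s dx − ∫_a^c f(x) dx − f(c)sε − (s/2)f'(c)ε². Then lim_{ε→+0} I⁻_s(c,f,ε)/ε = −A₁ s, uniformly for s ∈ (0,1). -/

import Mathlib

open MeasureTheory Real Filter

lemma integrableOn_of_bounded' {f : ℝ → ℝ} {s : Set ℝ} (hs : MeasurableSet s)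
    (hμ : MeasureTheory.volume s ≠ ⊤) (hm : AEStronglyMeasurable f (volume.restrict s))
    {M : ℝ} (hb : ∀ x ∈ s, ‖f x‖ ≤ M) : IntegrableOn f s := by
  refine ⟨hm, ?_⟩
  apply MeasureTheory.HasFiniteIntegral.restrict_of_bounded (C := M)
    (lt_top_iff_ne_top.mpr hμ)
  filter_upwards [ae_restrict_mem hs] with x hx using hb x hx

lemma geom_est {u v s m : ℝ} (hm : 0 < m) (hu : m ≤ u) (hv : m ≤ v)
    (hs0 : 0 ≤ s) (hs1 : s ≤ 1) :
    |u ^ (1-s) * v ^ s - u - s*(v-u)| ≤ (v-u)^2 / m := by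
  have u0 : 0 < u := hm.trans_le hu
  have v0 : 0 < v := hm.trans_le hv
  have hub : u ^ (1-s) * v ^ s ≤ (1-s)*u + s*v :=
    Real.geom_mean_le_arith_mean2_weighted (by linarith) hs0 u0.le v0.le (by ring)
  have key : u ^ (1-s) * v ^ s = u * Real.exp (Real.log (v/u) * s) := by
    rw [← Real.rpow_def_of_pos (by positivity)]
    rw [Real.div_rpow v0.le u0.le]
    rw [Real.rpow_sub u0, Real.rpow_one]
    field_simp
  have hexp : Real.log (v/u) * s + 1 ≤ Real.exp (Real.log (v/u) * s) :=
    Real.add_one_le_exp _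
  have hlog : (v - u)/v ≤ Real.log (v/u) := by
    have h1 := Real.one_sub_inv_le_log_of_pos (x := v/u) (by positivity)
    have hinv : 1 - (v/u)⁻¹ = (v-u)/v := by field_simp
    linarith [hinv ▸ h1]
  have hlb : u + s*(v-u) - s*(v-u)^2/v ≤ u ^ (1-s) * v ^ s := by
    have h2 : ((v-u)/v) * s ≤ Real.log (v/u) * s := mul_le_mul_of_nonneg_right hlog hs0
    have h3 : u * (((v-u)/v) * s + 1) ≤ u * Real.exp (Real.log (v/u) * s) := by
      apply mul_le_mul_of_nonneg_left _ u0.le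
      linarith
    have h4 : u * (((v-u)/v) * s + 1) = u + s*(v-u) - s*(v-u)^2/v := by
      field_simp; ring
    rw [key]; linarith
  have hd : s*(v-u)^2/v ≤ (v-u)^2/m := by
    rw [div_le_div_iff₀ v0 hm]
    nlinarith [sq_nonneg (v-u), mul_nonneg (sq_nonneg (v-u)) hm.le,
      mul_le_mul_of_nonneg_left hv (sq_nonneg (v-u)),
      mul_le_mul_of_nonneg_right hs1 (mul_nonneg (sq_nonneg (v-u)) hm.le)]
  rw [abs_le]
  constructor
  · linarith
  · nlinarith [sq_nonneg (v-u), div_nonneg (sq_nonneg (v-u)) hm.le]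

lemma bdd_of_tendsto {g : ℝ → ℝ} {a c' L : ℝ} (h : a < c')
    (hg : ContinuousOn g (Set.Ioc a c'))
    (hL : Tendsto g (nhdsWithin a (Set.Ioi a)) (nhds L)) :
    ∃ K, 0 ≤ K ∧ ∀ x ∈ Set.Ioc a c', |g x| ≤ K := by
  obtain ⟨δ, hδ, hδ2⟩ := Metric.tendsto_nhdsWithin_nhds.mp hL 1 one_pos
  set a' := min (a + δ/2) c' with ha'
  have haa' : a < a' := lt_min (by linarith) h
  have hsub : Set.Icc a' c' ⊆ Set.Ioc a c' := fun x hx => ⟨haa'.trans_le hx.1, hx.2⟩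
  obtain ⟨C, hC⟩ := (isCompact_Icc (a := a') (b := c')).exists_bound_of_continuousOn
    (hg.mono hsub)
  refine ⟨max (max C (|L|+1)) 0, le_max_right _ _, fun x hx => ?_⟩
  by_cases hxa : x < a'
  · have hd : dist x a < δ := by
      rw [Real.dist_eq, abs_of_pos (by linarith [hx.1])]
      have : x < a + δ/2 := hxa.trans_le (min_le_left _ _)
      linarith
    have := hδ2 (Set.mem_Ioi.mpr hx.1) hd
    rw [Real.dist_eq] at this
    have h2 : |g x| ≤ |L| + 1 := by
      have h3 := abs_sub_abs_le_abs_sub (g x) L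
      linarith
    exact h2.trans (le_max_of_le_left (le_max_right _ _))
  · have := hC x ⟨not_lt.mp hxa, hx.2⟩
    rw [Real.norm_eq_abs] at this
    exact this.trans (le_max_of_le_left (le_max_left _ _))

lemma lb_of_tendsto {g : ℝ → ℝ} {a c' A : ℝ} (h : a < c')
    (hg : ContinuousOn g (Set.Ioc a c'))
    (hpos : ∀ x ∈ Set.Ioc a c', 0 < g x)
    (hL : Tendsto g (nhdsWithin a (Set.Ioi a)) (nhds A)) (hA : 0 < A) :
    ∃ m, 0 < m ∧ ∀ x ∈ Set.Ioc a c', m ≤ g x := by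
  obtain ⟨δ, hδ, hδ2⟩ := Metric.tendsto_nhdsWithin_nhds.mp hL (A/2) (by linarith)
  set a' := min (a + δ/2) c' with ha'
  have haa' : a < a' := lt_min (by linarith) h
  have hsub : Set.Icc a' c' ⊆ Set.Ioc a c' := fun x hx => ⟨haa'.trans_le hx.1, hx.2⟩
  obtain ⟨x₀, hx₀, hmin⟩ := (isCompact_Icc (a := a') (b := c')).exists_isMinOn
    ⟨a', Set.mem_Icc.mpr ⟨le_refl _, (min_le_right _ _)⟩⟩ (hg.mono hsub)
  refine ⟨min (A/2) (g x₀), lt_min (by linarith) (hpos x₀ (hsub hx₀)), fun x hx => ?_⟩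
  by_cases hxa : x < a'
  · have hd : dist x a < δ := by
      rw [Real.dist_eq, abs_of_pos (by linarith [hx.1])]
      have : x < a + δ/2 := hxa.trans_le (min_le_left _ _)
      linarith
    have := hδ2 (Set.mem_Ioi.mpr hx.1) hd
    rw [Real.dist_eq, abs_lt] at this
    exact le_trans (min_le_left _ _) (by linarith [this.1])
  · exact le_trans (min_le_right _ _) (hmin ⟨not_lt.mp hxa, hx.2⟩)

set_option maxHeartbeats 1000000 in
theorem left_boundary_estimate_kappa_one (f : ℝ → ℝ) (a b c A₁ : ℝ)
    (hac : a < c) (hcb : c < b)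
    (hf3 : ContDiffOn ℝ 3 f (Set.Ioo a b))
    (hsupp : ∀ x ∉ Set.Ioo a b, f x = 0) (hpos : ∀ x ∈ Set.Ioo a b, 0 < f x)
    (hdens : ∫ x, f x = 1)
    (hA₁ : 0 < A₁)
    (hf_lim : Tendsto f (nhdsWithin a (Set.Ioi a)) (nhds A₁))
    (hf'_lim : ∃ L : ℝ, Tendsto (deriv f) (nhdsWithin a (Set.Ioi a)) (nhds L))
    (hf''_lim : ∃ M : ℝ, Tendsto (deriv (deriv f)) (nhdsWithin a (Set.Ioi a)) (nhds M)) :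
    TendstoUniformlyOn
      (fun ε s =>
        ((∫ x in Set.Ioo a c, f x ^ (1 - s) * f (x + ε) ^ s)
          - (∫ x in Set.Ioo a c, f x)
          - f c * s * ε - s / 2 * deriv f c * ε ^ 2) / ε)
      (fun s => -(A₁ * s))
      (nhdsWithin 0 (Set.Ioi 0)) (Set.Ioo 0 1) := by
  obtain ⟨L, hL⟩ := hf'_lim
  set c' : ℝ := (c + b)/2 with hc'def
  have hcc' : c < c' := by simp only [hc'def]; linarith
  have hc'b : c' < b := by simp only [hc'def]; linarith
  have hac' : a < c' := hac.trans hcc'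
  have hIoc_sub : Set.Ioc a c' ⊆ Set.Ioo a b := fun x hx => ⟨hx.1, lt_of_le_of_lt hx.2 hc'b⟩
  have hfc : ContinuousOn f (Set.Ioo a b) := hf3.continuousOn
  have hfc' : ContinuousOn f (Set.Ioc a c') := hfc.mono hIoc_sub
  have hf'c : ContinuousOn (deriv f) (Set.Ioo a b) :=
    hf3.continuousOn_deriv_of_isOpen isOpen_Ioo (by norm_num)
  obtain ⟨m, hm, hmle⟩ := lb_of_tendsto hac' hfc' (fun x hx => hpos x (hIoc_sub hx)) hf_lim hA₁
  obtain ⟨B, hB0, hBle⟩ := bdd_of_tendsto hac' hfc' hf_lim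
  obtain ⟨K, hK0, hKle⟩ := bdd_of_tendsto hac' (hf'c.mono hIoc_sub) hL
  have hfub : ∀ x ∈ Set.Ioc a c', f x ≤ B := fun x hx => (le_abs_self _).trans (hBle x hx)
  have hmB : m ≤ B := le_trans (hmle c' ⟨hac', le_refl c'⟩) (hfub c' ⟨hac', le_refl _⟩)
  have hB0' : 0 < B := lt_of_lt_of_le hm hmB
  have hdiff : ∀ z ∈ Set.Ioo a b, HasDerivAt f (deriv f z) z := fun z hz =>
    ((hf3.differentiableOn (by norm_num)).differentiableAt (isOpen_Ioo.mem_nhds hz)).hasDerivAt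
  -- Lipschitz bound on (a, c']
  have hlip : ∀ x y, a < x → x ≤ y → y ≤ c' → |f y - f x| ≤ K * (y - x) := by
    intro x y hax hxy hyc
    have hsub : Set.Icc x y ⊆ Set.Ioc a c' := fun z hz => ⟨hax.trans_le hz.1, hz.2.trans hyc⟩
    have h1 := norm_image_sub_le_of_norm_deriv_le_segment'
      (f := f) (f' := deriv f) (a := x) (b := y) (C := K)
      (fun z hz => (hdiff z (hIoc_sub (hsub hz))).hasDerivWithinAt)
      (fun z hz => by
        rw [Real.norm_eq_abs]
        exact hKle z (hsub ⟨hz.1, hz.2.le⟩)) y ⟨hxy, le_refl y⟩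
    rwa [Real.norm_eq_abs] at h1
  -- integrability of f near a
  have hfm : IntegrableOn f (Set.Ioc a c') := by
    refine integrableOn_of_bounded' measurableSet_Ioc measure_Ioc_lt_top.ne
      (hfc'.aestronglyMeasurable measurableSet_Ioc) (M := B) ?_
    intro x hx
    rw [Real.norm_eq_abs]; exact hBle x hx
  have hfint : ∀ p q, a ≤ p → p ≤ q → q ≤ c' → IntervalIntegrable f volume p q := by
    intro p q h1 h2 h3
    rw [intervalIntegrable_iff_integrableOn_Ioc_of_le h2]
    exact hfm.mono_set (Set.Ioc_subset_Ioc h1 h3)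
  set C₁ : ℝ := (c-a)*K^2/m + K + |deriv f c|/2 with hC₁def
  have hC₁0 : 0 ≤ C₁ := by
    have h1 : (0:ℝ) ≤ (c-a)*K^2/m := div_nonneg (mul_nonneg (by linarith) (by positivity)) hm.le
    have h2 : (0:ℝ) ≤ |deriv f c|/2 := by positivity
    simp only [hC₁def]; linarith
  rw [Metric.tendstoUniformlyOn_iff]
  intro η hη
  obtain ⟨δ₁, hδ₁, hδ₁2⟩ := Metric.tendsto_nhdsWithin_nhds.mp hf_lim (η/4) (by linarith)
  set δ : ℝ := min (min (c' - c) δ₁) ((η/2)/(C₁+1)) with hδdef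
  have hδ0 : 0 < δ := lt_min (lt_min (by linarith) hδ₁) (by positivity)
  filter_upwards [Ioo_mem_nhdsGT_of_mem ⟨le_refl (0:ℝ), hδ0⟩] with ε hε
  obtain ⟨hε0, hεδ⟩ := hε
  have hεc' : c + ε ≤ c' := by
    have h := lt_of_lt_of_le hεδ ((min_le_left _ _).trans (min_le_left _ _))
    linarith
  have hεδ₁ : ε < δ₁ := lt_of_lt_of_le hεδ ((min_le_left _ _).trans (min_le_right _ _))
  have hεC₁ : C₁ * ε < η/2 := by
    have h := (lt_div_iff₀ (by positivity : (0:ℝ) < C₁+1)).mp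
      (lt_of_lt_of_le hεδ (min_le_right _ _))
    nlinarith
  intro s hs
  obtain ⟨hs0, hs1⟩ := hs
  -- memberships
  have hmemx : ∀ x ∈ Set.Ioo a c, x ∈ Set.Ioc a c' := fun x hx =>
    ⟨hx.1, hx.2.le.trans hcc'.le⟩
  have hmemxe : ∀ x ∈ Set.Ioo a c, x + ε ∈ Set.Ioc a c' := fun x hx =>
    ⟨by linarith [hx.1], by linarith [hx.2]⟩
  -- integrability of the three integrands on Ioo a c
  have hIf : IntegrableOn f (Set.Ioo a c) :=
    hfm.mono_set (fun x hx => hmemx x hx)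
  have hshiftcont : ContinuousOn (fun x => f (x + ε)) (Set.Ioo a c) := by
    apply hfc.comp (Continuous.continuousOn (by continuity))
    intro x hx; exact hIoc_sub (hmemxe x hx)
  have hIsh : IntegrableOn (fun x => f (x + ε)) (Set.Ioo a c) := by
    refine integrableOn_of_bounded' measurableSet_Ioo measure_Ioo_lt_top.ne
      (hshiftcont.aestronglyMeasurable measurableSet_Ioo) (M := B) ?_
    intro x hx
    rw [Real.norm_eq_abs]; exact hBle _ (hmemxe x hx)
  have hGcont : ContinuousOn (fun x => f x ^ (1 - s) * f (x + ε) ^ s) (Set.Ioo a c) := by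
    apply ContinuousOn.mul
    · apply ContinuousOn.rpow_const (hfc.mono (fun x hx => hIoc_sub (hmemx x hx)))
      intro x hx
      exact Or.inl (ne_of_gt (lt_of_lt_of_le hm (hmle x (hmemx x hx))))
    · apply ContinuousOn.rpow_const hshiftcont
      intro x hx
      exact Or.inl (ne_of_gt (lt_of_lt_of_le hm (hmle _ (hmemxe x hx))))
  have hGbound : ∀ x ∈ Set.Ioo a c, ‖f x ^ (1 - s) * f (x + ε) ^ s‖ ≤ B := by
    intro x hx
    have hu0 : 0 < f x := lt_of_lt_of_le hm (hmle x (hmemx x hx))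
    have hv0 : 0 < f (x + ε) := lt_of_lt_of_le hm (hmle _ (hmemxe x hx))
    have h1 : f x ^ (1 - s) ≤ B ^ (1 - s) :=
      Real.rpow_le_rpow hu0.le (hfub x (hmemx x hx)) (by linarith)
    have h2 : f (x + ε) ^ s ≤ B ^ s :=
      Real.rpow_le_rpow hv0.le (hfub _ (hmemxe x hx)) hs0.le
    have h3 := mul_le_mul h1 h2 (Real.rpow_nonneg hv0.le s) (Real.rpow_nonneg hB0'.le _)
    rw [← Real.rpow_add hB0'] at h3
    norm_num at h3
    rw [Real.norm_eq_abs, abs_of_nonneg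
      (mul_nonneg (Real.rpow_nonneg hu0.le _) (Real.rpow_nonneg hv0.le _))]
    exact h3
  have hIG : IntegrableOn (fun x => f x ^ (1 - s) * f (x + ε) ^ s) (Set.Ioo a c) := by
    refine integrableOn_of_bounded' measurableSet_Ioo measure_Ioo_lt_top.ne
      (hGcont.aestronglyMeasurable measurableSet_Ioo) (M := B) ?_
    intro x hx
    exact hGbound x hx
  set G := ∫ x in Set.Ioo a c, f x ^ (1 - s) * f (x + ε) ^ s with hGdef
  set If := ∫ x in Set.Ioo a c, f x with hIfdef
  set Ish := ∫ x in Set.Ioo a c, f (x + ε) with hIshdef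
  -- E1 estimate
  have hE1 : |G - If - s * (Ish - If)| ≤ K^2 * ε^2 / m * (c - a) := by
    have hsubint : IntegrableOn (fun x => f (x + ε) - f x) (Set.Ioo a c) := hIsh.sub hIf
    have hsint : IntegrableOn (fun x => s * (f (x + ε) - f x)) (Set.Ioo a c) :=
      hsubint.const_mul s
    have hint2 : IntegrableOn (fun x => f x + s * (f (x + ε) - f x)) (Set.Ioo a c) :=
      hIf.add hsint
    have heq : G - If - s * (Ish - If) = ∫ x in Set.Ioo a c,
        (f x ^ (1 - s) * f (x + ε) ^ s - (f x + s * (f (x + ε) - f x))) := by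
      rw [integral_sub hIG hint2, integral_add hIf hsint,
        integral_const_mul, integral_sub hIsh hIf]
      simp only [hGdef, hIfdef, hIshdef]
      ring
    rw [heq, ← Real.norm_eq_abs]
    have hb := norm_setIntegral_le_of_norm_le_const (μ := volume)
      (s := Set.Ioo a c) (C := K^2 * ε^2 / m)
      (by rw [Real.volume_Ioo]; exact ENNReal.ofReal_lt_top)
      (f := fun x => f x ^ (1 - s) * f (x + ε) ^ s - (f x + s * (f (x + ε) - f x))) ?_
    · refine hb.trans ?_
      rw [Real.volume_real_Ioo_of_le (by linarith)]
    · intro x hx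
      have hu : m ≤ f x := hmle x (hmemx x hx)
      have hv : m ≤ f (x + ε) := hmle _ (hmemxe x hx)
      have hge := geom_est hm hu hv hs0.le hs1.le
      have hdb : |f (x + ε) - f x| ≤ K * ε := by
        have h0 := hlip x (x + ε) hx.1 (by linarith) (by linarith [hx.2])
        rwa [add_sub_cancel_left] at h0
      have hsq : (f (x + ε) - f x)^2 ≤ K^2 * ε^2 := by
        have := sq_le_sq' (by linarith [abs_le.mp hdb]) (abs_le.mp hdb).2
        calc (f (x + ε) - f x)^2 ≤ (K * ε)^2 := this
          _ = K^2 * ε^2 := by ring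
      rw [Real.norm_eq_abs]
      calc |f x ^ (1 - s) * f (x + ε) ^ s - (f x + s * (f (x + ε) - f x))|
          = |f x ^ (1 - s) * f (x + ε) ^ s - f x - s * (f (x + ε) - f x)| := by ring_nf
        _ ≤ (f (x + ε) - f x)^2 / m := hge
        _ ≤ K^2 * ε^2 / m := by gcongr
  -- shift identity
  have hIf' : If = ∫ x in a..c, f x := by
    rw [hIfdef, intervalIntegral.integral_of_le hac.le, integral_Ioc_eq_integral_Ioo]
  have hshift : Ish = (∫ x in c..(c+ε), f x) - (∫ x in a..(a+ε), f x) + If := by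
    have e1 : Ish = ∫ x in (a+ε)..(c+ε), f x := by
      rw [hIshdef, ← intervalIntegral.integral_comp_add_right f ε,
        intervalIntegral.integral_of_le hac.le, integral_Ioc_eq_integral_Ioo]
    have e2 : (∫ x in a..(a+ε), f x) + (∫ x in (a+ε)..(c+ε), f x) = ∫ x in a..(c+ε), f x :=
      intervalIntegral.integral_add_adjacent_intervals
        (hfint a (a+ε) le_rfl (by linarith) (by linarith))
        (hfint (a+ε) (c+ε) (by linarith) (by linarith) hεc')
    have e3 : (∫ x in a..c, f x) + (∫ x in c..(c+ε), f x) = ∫ x in a..(c+ε), f x :=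
      intervalIntegral.integral_add_adjacent_intervals
        (hfint a c le_rfl hac.le (by linarith))
        (hfint c (c+ε) hac.le (by linarith) hεc')
    rw [e1, hIf']
    linarith
  -- Rc estimate
  have hRc : |(∫ x in c..(c+ε), f x) - f c * ε| ≤ K * ε * ε := by
    have heq : (∫ x in c..(c+ε), f x) - f c * ε = ∫ x in c..(c+ε), (f x - f c) := by
      rw [intervalIntegral.integral_sub (hfint c (c+ε) hac.le (by linarith) hεc')
        intervalIntegrable_const, intervalIntegral.integral_const]
      simp
      ring
    rw [heq, ← Real.norm_eq_abs]
    have hb := intervalIntegral.norm_integral_le_of_norm_le_const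
      (C := K * ε) (a := c) (b := c + ε) (f := fun x => f x - f c) ?_
    · refine hb.trans_eq ?_
      rw [show c + ε - c = ε by ring, abs_of_pos hε0]
    · intro x hx
      rw [Set.uIoc_of_le (by linarith)] at hx
      have h1 := hlip c x hac hx.1.le (hx.2.trans hεc')
      rw [Real.norm_eq_abs]
      calc |f x - f c| ≤ K * (x - c) := h1
        _ ≤ K * ε := by nlinarith [hx.2, hx.1]
  -- Ra estimate
  have hRa : |(∫ x in a..(a+ε), f x) - A₁ * ε| ≤ η/4 * ε := by
    have heq : (∫ x in a..(a+ε), f x) - A₁ * ε = ∫ x in a..(a+ε), (f x - A₁) := by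
      rw [intervalIntegral.integral_sub (hfint a (a+ε) le_rfl (by linarith) (by linarith))
        intervalIntegrable_const, intervalIntegral.integral_const]
      simp
      ring
    rw [heq, ← Real.norm_eq_abs]
    have hb := intervalIntegral.norm_integral_le_of_norm_le_const
      (C := η/4) (a := a) (b := a + ε) (f := fun x => f x - A₁) ?_
    · refine hb.trans_eq ?_
      rw [show a + ε - a = ε by ring, abs_of_pos hε0]
    · intro x hx
      rw [Set.uIoc_of_le (by linarith)] at hx
      have hd : dist x a < δ₁ := by
        rw [Real.dist_eq, abs_of_pos (by linarith [hx.1])]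
        linarith [hx.2]
      have h1 := hδ₁2 (Set.mem_Ioi.mpr hx.1) hd
      rw [Real.dist_eq] at h1
      rw [Real.norm_eq_abs]
      exact h1.le
  -- assemble
  have habs : ∀ p q : ℝ, |p - q| ≤ |p| + |q| := fun p q => by
    rw [sub_eq_add_neg]
    exact (abs_add_le _ _).trans (by rw [abs_neg])
  have hkey : |G - If - f c * s * ε - s / 2 * deriv f c * ε ^ 2 + A₁ * s * ε|
      ≤ (C₁ * ε + η/4) * ε := by
    have hid : G - If - f c * s * ε - s / 2 * deriv f c * ε ^ 2 + A₁ * s * ε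
        = (G - If - s * (Ish - If)) + s * ((∫ x in c..(c+ε), f x) - f c * ε)
          - s * ((∫ x in a..(a+ε), f x) - A₁ * ε) - s / 2 * deriv f c * ε ^ 2 := by
      rw [hshift]; ring
    rw [hid]
    have b2 : |s * ((∫ x in c..(c+ε), f x) - f c * ε)| ≤ K * ε * ε := by
      rw [abs_mul, abs_of_pos hs0]
      nlinarith [abs_nonneg ((∫ x in c..(c+ε), f x) - f c * ε)]
    have b3 : |s * ((∫ x in a..(a+ε), f x) - A₁ * ε)| ≤ η/4 * ε := by
      rw [abs_mul, abs_of_pos hs0]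
      nlinarith [abs_nonneg ((∫ x in a..(a+ε), f x) - A₁ * ε)]
    have b4 : |s / 2 * deriv f c * ε ^ 2| ≤ |deriv f c| / 2 * ε ^ 2 := by
      rw [abs_mul, abs_mul, abs_of_pos (by positivity : (0:ℝ) < s/2),
        abs_of_nonneg (sq_nonneg ε)]
      nlinarith [mul_nonneg (mul_nonneg (by linarith : (0:ℝ) ≤ 1 - s)
        (abs_nonneg (deriv f c))) (sq_nonneg ε)]
    calc |(G - If - s * (Ish - If)) + s * ((∫ x in c..(c+ε), f x) - f c * ε)
          - s * ((∫ x in a..(a+ε), f x) - A₁ * ε) - s / 2 * deriv f c * ε ^ 2|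
        ≤ |(G - If - s * (Ish - If)) + s * ((∫ x in c..(c+ε), f x) - f c * ε)
          - s * ((∫ x in a..(a+ε), f x) - A₁ * ε)| + |s / 2 * deriv f c * ε ^ 2| :=
          habs _ _
      _ ≤ (|(G - If - s * (Ish - If)) + s * ((∫ x in c..(c+ε), f x) - f c * ε)|
          + |s * ((∫ x in a..(a+ε), f x) - A₁ * ε)|) + |s / 2 * deriv f c * ε ^ 2| := by
          gcongr
          exact habs _ _
      _ ≤ ((|G - If - s * (Ish - If)| + |s * ((∫ x in c..(c+ε), f x) - f c * ε)|)
          + |s * ((∫ x in a..(a+ε), f x) - A₁ * ε)|) + |s / 2 * deriv f c * ε ^ 2| := by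
          gcongr
          exact abs_add_le _ _
      _ ≤ ((K^2 * ε^2 / m * (c - a) + K * ε * ε) + η/4 * ε) + |deriv f c| / 2 * ε ^ 2 := by
          gcongr
      _ = (C₁ * ε + η/4) * ε := by
          simp only [hC₁def]
          field_simp
          ring
  rw [Real.dist_eq]
  have he : -(A₁ * s) - (G - If - f c * s * ε - s / 2 * deriv f c * ε ^ 2) / ε
      = -((G - If - f c * s * ε - s / 2 * deriv f c * ε ^ 2 + A₁ * s * ε) / ε) := by
    field_simp
    ring
  rw [he, abs_neg, abs_div, abs_of_pos hε0, div_lt_iff₀ hε0]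
  calc |G - If - f c * s * ε - s / 2 * deriv f c * ε ^ 2 + A₁ * s * ε|
      ≤ (C₁ * ε + η/4) * ε := hkey
    _ < η * ε := by nlinarith
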